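/- arXiv:2401.08028 — 3 statements merged into one kernel-verified Lean document; each statement's English description precedes it below -/
import Mathlib

section
/- There exists an absolute constant C > 0 such that for every θ ∈ (0, π/4] and every real t ≥ 0, one has |√(1 + tan²θ · t²) − cos θ − (1/2)·tan²θ·(t² + 1)| ≤ C·(1 + t⁴)·θ⁴. -/
open Real Set

/-- Quadratic Taylor bound for `√(1+x)`. -/
lemma aux_sqrt_bound (x : ℝ) (hx : 0 ≤ x) :
    |Real.sqrt (1 + x) - (1 + x / 2)| ≤ x ^ 2 / 8 := by
  have h1 : (0:ℝ) ≤ 1 + x := by linarith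
  have hr0 : 0 ≤ Real.sqrt (1 + x) := Real.sqrt_nonneg _
  have hr2 : Real.sqrt (1 + x) ^ 2 = 1 + x := Real.sq_sqrt h1
  rw [abs_le]
  constructor
  · -- sqrt(1+x) ≥ 1 + x/2 - x²/8
    rcases le_or_gt x 8 with h8 | h8
    · have := Real.le_sqrt_of_sq_le (x := 1 + x / 2 - x ^ 2 / 8) (y := 1 + x)
        (by nlinarith [mul_le_mul_of_nonneg_left h8 (pow_nonneg hx 3)])
      linarith
    · nlinarith [sq_nonneg (x - 8)]
  · -- sqrt(1+x) ≤ 1 + x/2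
    nlinarith [sq_nonneg (Real.sqrt (1 + x) - (1 + x / 2))]

/-- Quadratic Taylor bound for `cos θ = (√(1+tan²θ))⁻¹`. -/
lemma aux_cos_bound (s c : ℝ) (hs0 : 0 ≤ s) (hs1 : s ≤ 1) (hc : 0 < c)
    (hcs : (1 + s) * c ^ 2 = 1) :
    |c - (1 - s / 2)| ≤ 3 * s ^ 2 / 8 := by
  rw [abs_le]
  constructor
  · -- c ≥ 1 - s/2 - 3s²/8 ; indeed c ≥ 1 - s/2
    nlinarith [sq_nonneg (c - (1 - s / 2)), sq_nonneg (c + (1 - s / 2)), sq_nonneg s]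
  · -- c ≤ 1 - s/2 + 3s²/8
    have hg : 0 < 1 - s / 2 + 3 * s ^ 2 / 8 := by nlinarith
    have h3 : 0 ≤ s ^ 3 * (40 - 15 * s + 9 * s ^ 2) :=
      mul_nonneg (pow_nonneg hs0 3) (by nlinarith)
    have hsq : c ^ 2 ≤ (1 - s / 2 + 3 * s ^ 2 / 8) ^ 2 := by nlinarith [hcs, h3, hc.le]
    nlinarith [hsq, hg, hc]

/-- Taylor-type expansion linking the capillary integrand `√(1 + tan²θ · t²) − cos θ`
to the Alt–Caffarelli integrand `(1/2) tan²θ (t² + 1)`, with error of order `θ⁴`. -/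
theorem capillary_integrand_expansion :
    ∃ C : ℝ, 0 < C ∧
      ∀ θ ∈ Ioc (0 : ℝ) (π / 4), ∀ t : ℝ, 0 ≤ t →
        |Real.sqrt (1 + Real.tan θ ^ 2 * t ^ 2) - Real.cos θ
            - (1 / 2) * Real.tan θ ^ 2 * (t ^ 2 + 1)|
          ≤ C * (1 + t ^ 4) * θ ^ 4 := by
  refine ⟨6, by norm_num, ?_⟩
  rintro θ ⟨hθ0, hθ4⟩ t ht
  have hπ : (0:ℝ) < π := Real.pi_pos
  have hθ2 : θ < π / 2 := by linarith
  -- cos θ ≥ 1/2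
  have hcos_half : (1:ℝ) / 2 ≤ Real.cos θ := by
    have h1 : Real.cos (π / 4) ≤ Real.cos θ :=
      Real.cos_le_cos_of_nonneg_of_le_pi hθ0.le (by linarith) hθ4
    rw [Real.cos_pi_div_four] at h1
    have : (1:ℝ) ≤ Real.sqrt 2 := by
      rw [show (1:ℝ) = Real.sqrt 1 by simp]
      exact Real.sqrt_le_sqrt (by norm_num)
    linarith
  have hcpos : 0 < Real.cos θ := by linarith
  -- tan θ ≤ 2θ
  have htan0 : 0 < Real.tan θ := Real.tan_pos_of_pos_of_lt_pi_div_two hθ0 hθ2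
  have htan2 : Real.tan θ ≤ 2 * θ := by
    rw [Real.tan_eq_sin_div_cos, div_le_iff₀ hcpos]
    have hsin : Real.sin θ ≤ θ := Real.sin_le hθ0.le
    nlinarith
  -- tan θ ≤ 1
  have htan1 : Real.tan θ ≤ 1 := by
    have := Real.tan_lt_tan_of_nonneg_of_lt_pi_div_two (le_refl 0) hθ2 hθ0
    simp only [Real.tan_zero] at this
    calc Real.tan θ ≤ Real.tan (π / 4) := by
          rcases eq_or_lt_of_le hθ4 with h | h
          · rw [h]
          · exact (Real.tan_lt_tan_of_nonneg_of_lt_pi_div_two hθ0.le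
              (by linarith) h).le
      _ = 1 := Real.tan_pi_div_four
  set s := Real.tan θ ^ 2 with hs
  have hs0 : 0 ≤ s := sq_nonneg _
  have hs1 : s ≤ 1 := by nlinarith
  have hs4 : s ≤ 4 * θ ^ 2 := by nlinarith
  -- cos θ identity
  have hcs : (1 + s) * Real.cos θ ^ 2 = 1 := by
    have := Real.inv_one_add_tan_sq (x := θ) hcpos.ne'
    rw [← this]
    field_simp
    rw [hs]
  have hB := aux_cos_bound s (Real.cos θ) hs0 hs1 hcpos hcs
  have hA := aux_sqrt_bound (s * t ^ 2) (by positivity)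
  have hkey : Real.sqrt (1 + s * t ^ 2) - Real.cos θ - (1 / 2) * s * (t ^ 2 + 1)
      = (Real.sqrt (1 + s * t ^ 2) - (1 + s * t ^ 2 / 2))
        - (Real.cos θ - (1 - s / 2)) := by ring
  rw [hkey]
  have htri := abs_sub (Real.sqrt (1 + s * t ^ 2) - (1 + s * t ^ 2 / 2))
    (Real.cos θ - (1 - s / 2))
  have hs16 : s ^ 2 ≤ 16 * θ ^ 4 := by
    nlinarith [mul_le_mul hs4 hs4 hs0 (by positivity : (0:ℝ) ≤ 4 * θ ^ 2)]
  have hst : (s * t ^ 2) ^ 2 / 8 ≤ 2 * θ ^ 4 * t ^ 4 := by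
    nlinarith [mul_le_mul_of_nonneg_right hs16 (pow_nonneg ht 4)]
  have hs2 : 3 * s ^ 2 / 8 ≤ 6 * θ ^ 4 := by linarith
  have hθ4nn : 0 ≤ θ ^ 4 := by positivity
  calc |(Real.sqrt (1 + s * t ^ 2) - (1 + s * t ^ 2 / 2)) - (Real.cos θ - (1 - s / 2))|
      ≤ |Real.sqrt (1 + s * t ^ 2) - (1 + s * t ^ 2 / 2)| + |Real.cos θ - (1 - s / 2)| :=
        abs_sub _ _
    _ ≤ (s * t ^ 2) ^ 2 / 8 + 3 * s ^ 2 / 8 := add_le_add hA hB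
    _ ≤ 2 * θ ^ 4 * t ^ 4 + 6 * θ ^ 4 := add_le_add hst hs2
    _ ≤ 6 * (1 + t ^ 4) * θ ^ 4 := by nlinarith [pow_nonneg ht 4]
end

section
/- There exists an absolute constant C > 0 such that the following holds for every n ≥ 1. Let U ⊆ ℝⁿ be a bounded measurable set, let θ ∈ (0, π/4], let L ≥ 0, and let v : ℝⁿ → ℝ be a nonnegative Lipschitz function with Lipschitz constant at most L. Then |∫_{U ∩ {v>0}} (√(1 + tan²θ·|Dv(x)|²) − cos θ) dx − (1/2)·tan²θ·∫_U (|Dv(x)|² + 𝟙_{v>0}(x)) dx| ≤ C·(1 + L⁴)·θ⁴·|U|, where |U| denotes the Lebesgue measure of U. -/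
open MeasureTheory Metric Set Filter

lemma sqrt_expand {s : ℝ} (hs : 0 ≤ s) :
    |Real.sqrt (1 + s) - (1 + s / 2)| ≤ s ^ 2 / 8 := by
  have h0 : (0:ℝ) ≤ 1 + s := by linarith
  have hr : Real.sqrt (1 + s) ^ 2 = 1 + s := Real.sq_sqrt h0
  have hr0 : 1 ≤ Real.sqrt (1 + s) := by
    nlinarith [Real.sqrt_nonneg (1 + s)]
  set r := Real.sqrt (1 + s)
  rw [abs_le]
  constructor <;> nlinarith [sq_nonneg (r - 1), sq_nonneg (r + 1), sq_nonneg (r - 1 - s/2)]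

lemma theta_facts {θ : ℝ} (h0 : 0 < θ) (h4 : θ ≤ Real.pi / 4) :
    1/2 ≤ Real.cos θ ∧ 1 - θ^2/2 ≤ Real.cos θ ∧ Real.cos θ ≤ 1 ∧
    θ ≤ Real.tan θ ∧ Real.tan θ ≤ 2*θ ∧
    Real.tan θ ^ 2 * Real.cos θ ^ 2 = 1 - Real.cos θ ^ 2 := by
  have hpi : 0 < Real.pi := Real.pi_pos
  have hlt : θ < Real.pi / 2 := lt_of_le_of_lt h4 (by linarith)
  have hc3 : Real.sqrt 2 / 2 ≤ Real.cos θ := by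
    rw [← Real.cos_pi_div_four]
    exact Real.cos_le_cos_of_nonneg_of_le_pi h0.le (by linarith) h4
  have hs2 : (1:ℝ) ≤ Real.sqrt 2 := by
    nlinarith [Real.sq_sqrt (by norm_num : (0:ℝ) ≤ 2), Real.sqrt_nonneg 2]
  have hchalf : 1/2 ≤ Real.cos θ := by linarith
  have hcos1 : Real.cos θ ≤ 1 := Real.cos_le_one θ
  have hcos2 : 1 - θ^2/2 ≤ Real.cos θ := Real.one_sub_sq_div_two_le_cos
  have htan : θ ≤ Real.tan θ := (Real.lt_tan h0 hlt).le
  have hcpos : 0 < Real.cos θ := by linarith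
  have hsin : Real.sin θ ≤ θ := Real.sin_le h0.le
  have htc : Real.tan θ * Real.cos θ = Real.sin θ := by
    rw [Real.tan_eq_sin_div_cos]; field_simp
  have htanpos : 0 < Real.tan θ := lt_of_lt_of_le h0 htan
  have htan2 : Real.tan θ ≤ 2*θ := by nlinarith
  have hsq : Real.tan θ ^ 2 * Real.cos θ ^ 2 = 1 - Real.cos θ ^ 2 := by
    linear_combination (Real.tan θ * Real.cos θ + Real.sin θ) * htc + Real.sin_sq_add_cos_sq θ
  exact ⟨hchalf, hcos2, hcos1, htan, htan2, hsq⟩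

set_option maxHeartbeats 1000000 in
lemma pointwise_bound {θ a L : ℝ} (h0 : 0 < θ) (h4 : θ ≤ Real.pi / 4)
    (ha : 0 ≤ a) (haL : a ≤ L) :
    |Real.sqrt (1 + Real.tan θ ^ 2 * a ^ 2) - Real.cos θ
      - 1/2 * Real.tan θ ^ 2 * (a ^ 2 + 1)| ≤ 2 * (1 + L^4) * θ^4 := by
  obtain ⟨hc12, hc2, hc1, ht1, ht2, htc⟩ := theta_facts h0 h4
  set t := Real.tan θ
  have ht0 : 0 ≤ t := le_trans h0.le ht1
  set s := t^2 * a^2 with hsdef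
  have hs : 0 ≤ s := by positivity
  have h1 := sqrt_expand hs
  have hcossq : 0 < Real.cos θ := by linarith
  have h2 : |1 - Real.cos θ - t^2/2| ≤ 3/2 * θ^4 := by
    set c := Real.cos θ
    have h1c : 0 ≤ 1 - c := by linarith
    have key : (t^2/2 - (1-c)) * (2*c^2) = (1-c)^2*(1+2*c) := by linear_combination htc
    have e1 : (1-c)^2 ≤ (θ^2/2)^2 := by nlinarith
    have e2 : (1-c)^2*(1+2*c) ≤ 3/4*θ^4 := by nlinarith [sq_nonneg (1-c)]
    have hX : 0 ≤ t^2/2 - (1-c) := by nlinarith [sq_nonneg t]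
    have hc2sq : 1/2 ≤ 2*c^2 := by nlinarith
    have h5 : (t^2/2 - (1-c)) * (1/2) ≤ (t^2/2 - (1-c)) * (2*c^2) :=
      mul_le_mul_of_nonneg_left hc2sq hX
    have h6 : (0:ℝ) ≤ θ^4 := by positivity
    rw [abs_le]
    constructor
    · linarith [key, e2, h5]
    · linarith [hX, h6]
  have hsplit : Real.sqrt (1 + s) - Real.cos θ - 1/2 * t^2 * (a^2+1)
      = (Real.sqrt (1 + s) - (1 + s/2)) + (1 - Real.cos θ - t^2/2) := by
    rw [hsdef]; ring
  have hs2 : s^2 ≤ 16 * θ^4 * L^4 := by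
    have ht4 : t^4 ≤ (2*θ)^4 := pow_le_pow_left₀ ht0 ht2 4
    have ha4 : a^4 ≤ L^4 := pow_le_pow_left₀ ha haL 4
    have ht4' : 0 ≤ t^4 := by positivity
    calc s^2 = t^4 * a^4 := by rw [hsdef]; ring
      _ ≤ (2*θ)^4 * L^4 := by
          exact mul_le_mul ht4 ha4 (by positivity) (by positivity)
      _ = 16*θ^4 * L^4 := by ring
  calc |Real.sqrt (1 + s) - Real.cos θ - 1/2 * t^2 * (a^2+1)|
      ≤ |Real.sqrt (1 + s) - (1 + s/2)| + |1 - Real.cos θ - t^2/2| := by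
        rw [hsplit]; exact abs_add_le _ _
    _ ≤ s^2/8 + 3/2*θ^4 := by linarith
    _ ≤ 2 * (1 + L^4) * θ^4 := by
        have hq : 2 * (1 + L^4) * θ^4 = 2*θ^4 + 2*(θ^4*L^4) := by ring
        have h7 : (0:ℝ) ≤ θ^4 := by positivity
        linarith [hs2]

/-- The Alt–Caffarelli functional `J_U(w) = ∫_U (|Dw|² + 1_{w>0})`, with the gradient
realized as the Fréchet derivative (which exists a.e. by Rademacher's theorem). -/
noncomputable def ACF {n : ℕ} (U : Set (EuclideanSpace ℝ (Fin n)))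
    (w : EuclideanSpace ℝ (Fin n) → ℝ) : ℝ :=
  ∫ x in U, (‖fderiv ℝ w x‖ ^ 2 + Set.indicator {y | 0 < w y} (fun _ => (1 : ℝ)) x)

/-- Rigorous expansion of the capillary graph energy of `u = tanθ · v` in terms of the
Alt–Caffarelli functional `J_U(v)`, with error of order `θ⁴`. -/
theorem capillary_energy_AC_expansion :
    ∃ C : ℝ, 0 < C ∧
      ∀ (n : ℕ), 1 ≤ n →
        ∀ U : Set (EuclideanSpace ℝ (Fin n)), MeasurableSet U → Bornology.IsBounded U →
          ∀ θ ∈ Set.Ioc (0 : ℝ) (Real.pi / 4), ∀ L : ℝ, 0 ≤ L →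
            ∀ v : EuclideanSpace ℝ (Fin n) → ℝ, (∀ x, 0 ≤ v x) →
              LipschitzWith (Real.toNNReal L) v →
              |(∫ x in U ∩ {y | 0 < v y},
                  (Real.sqrt (1 + Real.tan θ ^ 2 * ‖fderiv ℝ v x‖ ^ 2) - Real.cos θ))
                - (1 / 2) * Real.tan θ ^ 2 * ACF U v|
              ≤ C * (1 + L ^ 4) * θ ^ 4 * (volume U).toReal := by
  refine ⟨2, by norm_num, ?_⟩
  intro n hn U hU hUb θ hθ L hL v hv hlip
  obtain ⟨hθ0, hθ4⟩ := hθ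
  set t := Real.tan θ with ht
  have hvc : Continuous v := hlip.continuous
  have hP : MeasurableSet {y : EuclideanSpace ℝ (Fin n) | 0 < v y} :=
    measurableSet_lt measurable_const hvc.measurable
  set S := U ∩ {y : EuclideanSpace ℝ (Fin n) | 0 < v y} with hSdef
  have hSm : MeasurableSet S := hU.inter hP
  have hUvol : volume U ≠ ⊤ := hUb.measure_lt_top.ne
  have hSU : volume S ≤ volume U := measure_mono inter_subset_left
  have hSvol : volume S ≠ ⊤ := ne_top_of_le_ne_top hUvol hSU
  -- gradient bounds
  have hgL : ∀ x, ‖fderiv ℝ v x‖ ≤ L := fun x => by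
    have h := norm_fderiv_le_of_lipschitz ℝ hlip (x₀ := x)
    rwa [Real.coe_toNNReal L hL] at h
  have hg0 : ∀ x, v x = 0 → fderiv ℝ v x = 0 := fun x hx => by
    have hmin : IsLocalMin v x :=
      Filter.Eventually.of_forall (fun y => by rw [hx]; exact hv y)
    exact hmin.fderiv_eq_zero
  have hnormmeas : Measurable fun x => ‖fderiv ℝ v x‖ := (measurable_fderiv ℝ v).norm
  -- rewrite ACF
  have hACF : ACF U v = ∫ x in S, (‖fderiv ℝ v x‖ ^ 2 + 1) := by
    have h1 : ∀ x, (‖fderiv ℝ v x‖ ^ 2 + Set.indicator {y | 0 < v y} (fun _ => (1:ℝ)) x)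
        = Set.indicator {y | 0 < v y}
            (fun z => ‖fderiv ℝ v z‖ ^ 2 + Set.indicator {y | 0 < v y} (fun _ => (1:ℝ)) z) x := by
      intro x
      by_cases hx : x ∈ {y : EuclideanSpace ℝ (Fin n) | 0 < v y}
      · exact (Set.indicator_of_mem hx
          (fun z => ‖fderiv ℝ v z‖ ^ 2 + Set.indicator {y | 0 < v y} (fun _ => (1:ℝ)) z)).symm
      · have hvx : v x = 0 := le_antisymm (not_lt.1 hx) (hv x)
        rw [Set.indicator_of_notMem hx, Set.indicator_of_notMem hx, hg0 x hvx]
        simp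
    have h2 : (∫ x in U, (‖fderiv ℝ v x‖ ^ 2 + Set.indicator {y | 0 < v y} (fun _ => (1:ℝ)) x))
        = ∫ x in U ∩ {y : EuclideanSpace ℝ (Fin n) | 0 < v y},
            (‖fderiv ℝ v x‖ ^ 2 + Set.indicator {y | 0 < v y} (fun _ => (1:ℝ)) x) := by
      rw [← setIntegral_indicator hP]
      exact setIntegral_congr_fun hU (fun x _ => h1 x)
    rw [ACF, h2]
    exact setIntegral_congr_fun hSm (fun x hx => by rw [Set.indicator_of_mem hx.2])
  -- integrability
  have hgmeas : Measurable fun x => ‖fderiv ℝ v x‖ ^ 2 + (1:ℝ) :=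
    (hnormmeas.pow_const 2).add measurable_const
  have hfmeas : Measurable fun x => Real.sqrt (1 + t ^ 2 * ‖fderiv ℝ v x‖ ^ 2) - Real.cos θ :=
    (Real.continuous_sqrt.measurable.comp
      (((hnormmeas.pow_const 2).const_mul (t ^ 2)).const_add 1)).sub measurable_const
  have hgint : IntegrableOn (fun x => ‖fderiv ℝ v x‖ ^ 2 + (1:ℝ)) S :=
    Measure.integrableOn_of_bounded hSvol hgmeas.aestronglyMeasurable
      (M := L ^ 2 + 1)
      (Filter.Eventually.of_forall fun x => by
        have h1 := hgL x
        have h2 : (0:ℝ) ≤ ‖fderiv ℝ v x‖ := norm_nonneg _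
        rw [Real.norm_eq_abs, abs_of_nonneg (by positivity)]
        nlinarith)
  have hfint : IntegrableOn
      (fun x => Real.sqrt (1 + t ^ 2 * ‖fderiv ℝ v x‖ ^ 2) - Real.cos θ) S :=
    Measure.integrableOn_of_bounded hSvol hfmeas.aestronglyMeasurable
      (M := Real.sqrt (1 + t ^ 2 * L ^ 2) + 1)
      (Filter.Eventually.of_forall fun x => by
        have h1 := hgL x
        have h2 : (0:ℝ) ≤ ‖fderiv ℝ v x‖ := norm_nonneg _
        have h3 : Real.sqrt (1 + t ^ 2 * ‖fderiv ℝ v x‖ ^ 2) ≤ Real.sqrt (1 + t ^ 2 * L ^ 2) :=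
          Real.sqrt_le_sqrt (by
            have h6 : ‖fderiv ℝ v x‖ ^ 2 ≤ L ^ 2 := by nlinarith
            have h7 := mul_le_mul_of_nonneg_left h6 (sq_nonneg t)
            linarith)
        have h4 : (0:ℝ) ≤ Real.sqrt (1 + t ^ 2 * ‖fderiv ℝ v x‖ ^ 2) := Real.sqrt_nonneg _
        have h5 : |Real.cos θ| ≤ 1 := Real.abs_cos_le_one θ
        rw [Real.norm_eq_abs]
        rw [abs_sub_le_iff]
        constructor <;> cases' abs_le.1 h5 with h5a h5b <;> linarith)
  -- combine integrals
  have hcomb : (∫ x in S, (Real.sqrt (1 + t ^ 2 * ‖fderiv ℝ v x‖ ^ 2) - Real.cos θ))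
      - (1/2) * t ^ 2 * ∫ x in S, (‖fderiv ℝ v x‖ ^ 2 + 1)
      = ∫ x in S, ((Real.sqrt (1 + t ^ 2 * ‖fderiv ℝ v x‖ ^ 2) - Real.cos θ)
          - (1/2) * t ^ 2 * (‖fderiv ℝ v x‖ ^ 2 + 1)) := by
    rw [← integral_const_mul, ← integral_sub hfint (hgint.const_mul _)]
  rw [hACF, hcomb]
  have hbound : ‖∫ x in S, ((Real.sqrt (1 + t ^ 2 * ‖fderiv ℝ v x‖ ^ 2) - Real.cos θ)
      - (1/2) * t ^ 2 * (‖fderiv ℝ v x‖ ^ 2 + 1))‖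
      ≤ (2 * (1 + L ^ 4) * θ ^ 4) * (volume S).toReal := by
    refine norm_setIntegral_le_of_norm_le_const hSvol.lt_top (fun x _ => ?_)
    · rw [Real.norm_eq_abs]
      have := pointwise_bound hθ0 hθ4 (norm_nonneg (fderiv ℝ v x)) (hgL x)
      convert this using 2
  rw [← Real.norm_eq_abs]
  refine le_trans hbound ?_
  have hmono : (volume S).toReal ≤ (volume U).toReal :=
    ENNReal.toReal_mono hUvol hSU
  have : (0:ℝ) ≤ 2 * (1 + L ^ 4) * θ ^ 4 := by positivity
  exact mul_le_mul_of_nonneg_left hmono this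
end

section
/- For every integer n with 2 ≤ n ≤ 6 and every constant c > 0, there exists θ₁ ∈ (0, π/2) such that for every θ ∈ (π/2 − θ₁, π/2] there exist real numbers p ∈ (1/2, 1), ε > 0, and λ ∈ (0, 1) satisfying the following four inequalities, where K denotes |cot θ| / sin θ: (i) 3·c·K ≤ p·(p − 2 + (1 − λ)·(1 + 2/n) + λ); (ii) (1 + ε)² ≤ 2·(1 − 2·c·K); (iii) (n/2 − 2 + ε)² ≤ 2·(1 − 2·c·K); (iv) 1 − p + 2·c·K ≥ 0. -/
open Real Set

set_option maxHeartbeats 1000000 in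
/-- Feasibility of the parameters `(p, ε, λ)` in the Simons-type argument for stable
minimizing capillary cones with contact angle `θ` close to `π/2`, in dimensions
`2 ≤ n ≤ 6`.  Here `K = |cot θ| / sin θ`. -/
theorem capillary_parameter_feasibility
    (n : ℕ) (hn2 : 2 ≤ n) (hn6 : n ≤ 6) (c : ℝ) (hc : 0 < c) :
    ∃ θ₁ ∈ Set.Ioo (0 : ℝ) (π / 2),
      ∀ θ ∈ Set.Ioc (π / 2 - θ₁) (π / 2),
        ∃ p ∈ Set.Ioo (1 / 2 : ℝ) 1, ∃ ε > (0 : ℝ), ∃ lam ∈ Set.Ioo (0 : ℝ) 1,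
          3 * c * (|Real.cot θ| / Real.sin θ)
              ≤ p * (p - 2 + (1 - lam) * (1 + 2 / (n : ℝ)) + lam) ∧
          (1 + ε) ^ 2 ≤ 2 * (1 - 2 * c * (|Real.cot θ| / Real.sin θ)) ∧
          ((n : ℝ) / 2 - 2 + ε) ^ 2 ≤ 2 * (1 - 2 * c * (|Real.cot θ| / Real.sin θ)) ∧
          1 - p + 2 * c * (|Real.cot θ| / Real.sin θ) ≥ 0 := by
  have hpi : (0:ℝ) < π := Real.pi_pos
  set θ₁ : ℝ := min (π/4) (3/(100*c)) with hθ₁def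
  have hθ₁pos : 0 < θ₁ := lt_min (by linarith) (by positivity)
  have hθ₁le : θ₁ ≤ π/4 := min_le_left _ _
  have hθ₁le' : θ₁ ≤ 3/(100*c) := min_le_right _ _
  refine ⟨θ₁, ⟨hθ₁pos, by linarith⟩, ?_⟩
  intro θ hθ
  obtain ⟨hθl, hθu⟩ := hθ
  have hθl4 : π/4 < θ := by linarith
  have hθpos : 0 < θ := by linarith
  have hsinpos : 0 < Real.sin θ := Real.sin_pos_of_pos_of_lt_pi hθpos (by linarith)
  -- lower bound on sin θ
  have hsin4 : Real.sin (π/4) ≤ Real.sin θ := by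
    apply Real.sin_le_sin_of_le_of_le_pi_div_two (by linarith) hθu (le_of_lt hθl4)
  have hsinval : Real.sin (π/4) = Real.sqrt 2 / 2 := Real.sin_pi_div_four
  have h2 : (1:ℝ) ≤ Real.sqrt 2 * Real.sqrt 2 / 2 := by
    rw [Real.mul_self_sqrt (by norm_num)]; norm_num
  have hsinsq : (1:ℝ)/2 ≤ Real.sin θ * Real.sin θ := by
    have h0 : (0:ℝ) ≤ Real.sqrt 2 / 2 := by positivity
    nlinarith [hsin4, hsinval]
  -- upper bound on cos θ
  have hcosnn : 0 ≤ Real.cos θ := Real.cos_nonneg_of_mem_Icc ⟨by linarith, hθu⟩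
  have hcosle : Real.cos θ ≤ Real.sin θ₁ := by
    have := Real.cos_le_cos_of_nonneg_of_le_pi (by linarith : 0 ≤ π/2 - θ₁)
      (by linarith : θ ≤ π) (le_of_lt hθl)
    rwa [Real.cos_pi_div_two_sub] at this
  have hsinθ₁ : Real.sin θ₁ ≤ θ₁ := Real.sin_le (le_of_lt hθ₁pos)
  -- K bound
  set K := |Real.cot θ| / Real.sin θ with hKdef
  have hKeq : K = Real.cos θ / (Real.sin θ * Real.sin θ) := by
    rw [hKdef, Real.cot_eq_cos_div_sin, abs_div, abs_of_nonneg hcosnn,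
      abs_of_pos hsinpos, div_div]
  have hKnn : 0 ≤ K := by rw [hKeq]; positivity
  have hKle : K ≤ 2 * Real.cos θ := by
    rw [hKeq, div_le_iff₀ (by nlinarith)]
    nlinarith
  have hcK : c * K ≤ 3/50 := by
    have h1 : Real.cos θ ≤ 3/(100*c) := by linarith
    have h2 : c * K ≤ c * (2 * Real.cos θ) :=
      mul_le_mul_of_nonneg_left hKle (le_of_lt hc)
    have h3 : c * (2 * Real.cos θ) ≤ c * (2 * (3/(100*c))) := by
      apply mul_le_mul_of_nonneg_left _ (le_of_lt hc)
      linarith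
    have h4 : c * (2 * (3/(100*c))) = 3/50 := by field_simp; ring
    linarith
  have hcKnn : 0 ≤ c * K := mul_nonneg (le_of_lt hc) hKnn
  -- parameters
  refine ⟨9/10, ⟨by norm_num, by norm_num⟩, 1/10, by norm_num, 1/10,
    ⟨by norm_num, by norm_num⟩, ?_, ?_, ?_, ?_⟩
  · have hn2' : (2:ℝ) ≤ (n:ℝ) := by exact_mod_cast hn2
    have hn6' : (n:ℝ) ≤ 6 := by exact_mod_cast hn6
    have hnpos : (0:ℝ) < (n:ℝ) := by linarith
    have h2n : (1:ℝ)/3 ≤ 2/(n:ℝ) := by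
      rw [le_div_iff₀ hnpos]; linarith
    have : (9:ℝ)/10 * (9/10 - 2 + (1 - 1/10) * (1 + 2/(n:ℝ)) + 1/10)
        = -9/100 + (81/100) * (2/(n:ℝ)) := by ring
    rw [this]
    linarith
  · have : ((1:ℝ) + 1/10)^2 = 121/100 := by norm_num
    rw [this]; linarith
  · have hn2' : (2:ℝ) ≤ (n:ℝ) := by exact_mod_cast hn2
    have hn6' : (n:ℝ) ≤ 6 := by exact_mod_cast hn6
    have hsq : ((n:ℝ)/2 - 2 + 1/10)^2 ≤ 121/100 := by
      nlinarith [mul_nonneg (by linarith : (0:ℝ) ≤ (n:ℝ) - 2) (by linarith : (0:ℝ) ≤ 6 - (n:ℝ))]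
    linarith
  · linarith
end
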